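/- Let q ∈ ℂ with 0 < |q| < 1 and let y ∈ ℂ satisfy |q| < |y| < 1/|q| with y ≠ q^s for all s ∈ ℤ. Then the doubly infinite series Σ_{s∈ℤ} q^s·y/(1 − q^s·y)² converges absolutely and equals y/(1−y)² + Σ_{d≥1} (Σ_{k | d} k·(y^k + y^{−k}))·q^d, where the series on the right also converges absolutely. -/

import Mathlib

set_option maxHeartbeats 1000000

namespace AvgOpAux

/-- Auxiliary double series: `G q z (k,i) = k zᵏ q^{k i}`, zeroed out when `i = 0`. -/
noncomputable def G (q z : ℂ) (p : ℕ × ℕ) : ℂ :=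
  (p.1 : ℂ) * z ^ p.1 * (if p.2 = 0 then 0 else q ^ (p.1 * p.2))

lemma G_eq_zero {q z : ℂ} {p : ℕ × ℕ} (h : p.1 = 0 ∨ p.2 = 0) : G q z p = 0 := by
  rcases h with h | h <;> simp [G, h]

lemma summable_G {q z : ℂ} (hq1 : ‖q‖ < 1)
    (hqz : ‖q‖ * ‖z‖ < 1) : Summable (G q z) := by
  have hinj : Function.Injective (fun p : ℕ × ℕ => (p.1 + 1, p.2 + 1)) := by
    intro a b h
    simp only [Prod.mk.injEq] at h
    exact Prod.ext (by omega) (by omega)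
  rw [← hinj.summable_iff]
  · set r : ℝ := ‖q‖ * ‖z‖ with hr
    have hr0 : 0 ≤ r := mul_nonneg (norm_nonneg _) (norm_nonneg _)
    have hq0' : (0:ℝ) ≤ ‖q‖ := norm_nonneg _
    have hf1 : Summable (fun k : ℕ => ((k:ℝ) + 1) * r ^ (k + 1)) := by
      have h1 : Summable (fun n : ℕ => (n : ℝ) ^ 1 * r ^ n) :=
        summable_pow_mul_geometric_of_norm_lt_one 1 (by
          rwa [Real.norm_eq_abs, abs_of_nonneg hr0])
      have h2 := h1.comp_injective (add_left_injective 1)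
      refine h2.congr (fun k => ?_)
      simp [pow_one]
    have hf2 : Summable (fun j : ℕ => (‖q‖) ^ j) :=
      summable_geometric_of_lt_one hq0' hq1
    have hsum : Summable (fun p : ℕ × ℕ =>
        (((p.1:ℝ) + 1) * r ^ (p.1 + 1)) * (‖q‖) ^ p.2) :=
      Summable.mul_of_nonneg hf1 hf2 (fun k => by positivity) (fun j => by positivity)
    refine Summable.of_norm_bounded hsum ?_
    rintro ⟨k, j⟩
    simp only [Function.comp_apply, G, Nat.add_eq_zero, one_ne_zero, and_false, if_false,
      norm_mul, norm_pow]
    have habs : ‖((k+1 : ℕ) : ℂ)‖ = (k:ℝ) + 1 := by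
      rw [Complex.norm_natCast]; push_cast; ring
    have h2 : ‖q‖ ^ ((k+1) * j) ≤ ‖q‖ ^ j :=
      pow_le_pow_of_le_one hq0' hq1.le (Nat.le_mul_of_pos_left j k.succ_pos)
    have h1 : ‖z‖ ^ (k+1) * ‖q‖ ^ ((k+1) * (j+1))
        ≤ r ^ (k+1) * ‖q‖ ^ j := by
      have he : ‖q‖ ^ ((k+1) * (j+1)) =
          ‖q‖ ^ (k+1) * ‖q‖ ^ ((k+1) * j) := by
        rw [← pow_add]; ring_nf
      rw [he, hr, mul_pow]
      calc ‖z‖ ^ (k+1) * (‖q‖ ^ (k+1) * ‖q‖ ^ ((k+1)*j))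
          ≤ ‖z‖ ^ (k+1) * (‖q‖ ^ (k+1) * ‖q‖ ^ j) := by
            apply mul_le_mul_of_nonneg_left _ (by positivity)
            exact mul_le_mul_of_nonneg_left h2 (by positivity)
        _ = ‖q‖ ^ (k+1) * ‖z‖ ^ (k+1) * ‖q‖ ^ j := by ring
    calc ‖((k+1 : ℕ) : ℂ)‖ * ‖z‖ ^ (k+1)
          * ‖q‖ ^ ((k+1)*(j+1))
        = ((k:ℝ)+1) * (‖z‖ ^ (k+1) * ‖q‖ ^ ((k+1)*(j+1))) := by
          rw [habs]; ring
      _ ≤ ((k:ℝ)+1) * (r ^ (k+1) * ‖q‖ ^ j) :=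
          mul_le_mul_of_nonneg_left h1 (by positivity)
      _ = ((k:ℝ)+1) * r ^ (k+1) * ‖q‖ ^ j := by ring
  · rintro ⟨a, b⟩ hp
    apply G_eq_zero
    by_contra h
    push_neg at h
    exact hp ⟨(a - 1, b - 1), by simp only [Prod.mk.injEq]; omega⟩

lemma hasSum_G_fiber {q z : ℂ} (hq1 : ‖q‖ < 1)
    (hqz : ‖q‖ * ‖z‖ < 1) (i : ℕ) :
    HasSum (fun k => G q z (k, i))
      (if i = 0 then 0 else (q ^ i * z) / (1 - q ^ i * z) ^ 2) := by
  rcases eq_or_ne i 0 with rfl | hi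
  · simp only [if_pos rfl]
    have : (fun k => G q z (k, 0)) = fun _ => (0:ℂ) := by
      funext k; exact G_eq_zero (Or.inr rfl)
    rw [this]; exact hasSum_zero
  · rw [if_neg hi]
    have hw : ‖q ^ i * z‖ < 1 := by
      rw [norm_mul, norm_pow]
      calc ‖q‖ ^ i * ‖z‖
          ≤ ‖q‖ ^ 1 * ‖z‖ := by
            apply mul_le_mul_of_nonneg_right _ (norm_nonneg _)
            exact pow_le_pow_of_le_one (norm_nonneg _) hq1.le
              (Nat.one_le_iff_ne_zero.2 hi)
        _ = ‖q‖ * ‖z‖ := by rw [pow_one]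
        _ < 1 := hqz
    have h := hasSum_coe_mul_geometric_of_norm_lt_one (𝕜 := ℂ) hw
    have he : (fun k : ℕ => G q z (k, i)) = fun k : ℕ => (k:ℂ) * (q ^ i * z) ^ k := by
      funext k
      simp only [G, if_neg hi, mul_pow, ← pow_mul]
      ring_nf
    rw [he]; exact h

lemma hasSum_G_divisors {q z : ℂ} (hsum : Summable (G q z)) :
    HasSum (fun d : ℕ => (∑ k ∈ Nat.divisors d, (k : ℂ) * z ^ k) * q ^ d)
      (∑' p, G q z p) := by
  have h := hsum.hasSum.tsum_fiberwise (fun p => p.1 * p.2)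
  have key : ∀ n : ℕ, (∑' (c : (fun p : ℕ × ℕ => p.1 * p.2) ⁻¹' {n}), G q z c)
      = (∑ k ∈ Nat.divisors n, (k : ℂ) * z ^ k) * q ^ n := by
    intro n
    rcases eq_or_ne n 0 with rfl | hn
    · rw [Nat.divisors_zero, Finset.sum_empty, zero_mul]
      have : ∀ c : (fun p : ℕ × ℕ => p.1 * p.2) ⁻¹' {0}, G q z c = 0 := by
        rintro ⟨⟨a, b⟩, hc⟩
        simp only [Set.mem_preimage, Set.mem_singleton_iff, Nat.mul_eq_zero] at hc
        exact G_eq_zero hc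
      simp only [this, tsum_zero]
    · have hset : (fun p : ℕ × ℕ => p.1 * p.2) ⁻¹' {n} = ↑(Nat.divisorsAntidiagonal n) := by
        ext p
        simp [Nat.mem_divisorsAntidiagonal, hn]
      rw [hset, Finset.tsum_subtype' (Nat.divisorsAntidiagonal n) (G q z)]
      have hterm : ∀ p ∈ Nat.divisorsAntidiagonal n,
          G q z p = (p.1 : ℂ) * z ^ p.1 * q ^ n := by
        intro p hp
        obtain ⟨hmul, -⟩ := Nat.mem_divisorsAntidiagonal.mp hp
        have h2 : p.2 ≠ 0 := by
          intro h0; rw [h0, mul_zero] at hmul; exact hn hmul.symm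
        rw [G, if_neg h2, hmul]
      rw [Finset.sum_congr rfl hterm, ← Finset.sum_mul]
      congr 1
      exact Nat.sum_divisorsAntidiagonal (fun a b => (a : ℂ) * z ^ a)
  exact (funext key : _ = _) ▸ h

lemma hasSum_G_rows {q z : ℂ} (hq1 : ‖q‖ < 1)
    (hqz : ‖q‖ * ‖z‖ < 1) (hsum : Summable (G q z)) :
    HasSum (fun i : ℕ => if i = 0 then 0 else (q ^ i * z) / (1 - q ^ i * z) ^ 2)
      (∑' p, G q z p) := by
  have hswap : HasSum (fun p : ℕ × ℕ => G q z (p.2, p.1)) (∑' p, G q z p) := by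
    have := (Equiv.prodComm ℕ ℕ).hasSum_iff (f := G q z) (a := ∑' p, G q z p)
    exact this.mpr hsum.hasSum
  exact hswap.prod_fiberwise (fun i => hasSum_G_fiber hq1 hqz i)

lemma aux_inv (a y : ℂ) (ha : a ≠ 0) (hy : y ≠ 0) (hne : y ≠ a) :
    a * y⁻¹ / (1 - a * y⁻¹) ^ 2 = a⁻¹ * y / (1 - a⁻¹ * y) ^ 2 := by
  have hya : y - a ≠ 0 := sub_ne_zero.mpr hne
  have hay : a - y ≠ 0 := sub_ne_zero.mpr (Ne.symm hne)
  have e1 : 1 - a * y⁻¹ = (y - a) / y := by field_simp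
  have e2 : 1 - a⁻¹ * y = (a - y) / a := by field_simp
  rw [e1, e2, div_pow, div_pow, div_div_eq_mul_div, div_div_eq_mul_div,
    div_eq_div_iff (pow_ne_zero 2 hya) (pow_ne_zero 2 hay)]
  field_simp
  ring

end AvgOpAux

open AvgOpAux in
/-- The averaging-operator identity:
`∑_{s∈ℤ} q^s y/(1 - q^s y)² = y/(1-y)² + ∑_{d≥1} (∑_{k|d} k (yᵏ + y⁻ᵏ)) q^d`,
for `0 < |q| < 1`, `|q| < |y| < 1/|q|` and `y ≠ qˢ` for all `s ∈ ℤ`.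
Both series converge (`HasSum` in `ℂ`, equivalent to absolute convergence here);
the term `d = 0` on the right vanishes since `Nat.divisors 0 = ∅`. -/
theorem averaging_operator_identity (q y : ℂ)
    (hq0 : 0 < ‖q‖) (hq1 : ‖q‖ < 1)
    (hy0 : y ≠ 0) (hylb : ‖q‖ < ‖y‖)
    (hyub : ‖y‖ < (‖q‖)⁻¹)
    (hys : ∀ s : ℤ, y ≠ q ^ s) :
    ∃ T : ℂ,
      HasSum (fun s : ℤ => q ^ s * y / (1 - q ^ s * y) ^ 2) (y / (1 - y) ^ 2 + T) ∧
      HasSum (fun d : ℕ =>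
        (∑ k ∈ Nat.divisors d, (k : ℂ) * (y ^ (k : ℤ) + y ^ (-(k : ℤ)))) * q ^ d) T := by
  have hq : q ≠ 0 := fun h => by simp [h] at hq0
  have hy : 0 < ‖y‖ := norm_pos_iff.mpr hy0
  have hqz1 : ‖q‖ * ‖y‖ < 1 := by
    have h := mul_lt_mul_of_pos_left hyub hq0
    rwa [mul_inv_cancel₀ (ne_of_gt hq0)] at h
  have hqz2 : ‖q‖ * ‖y⁻¹‖ < 1 := by
    rw [norm_inv, ← div_eq_mul_inv]
    exact (div_lt_one hy).2 hylb
  have hs1 := summable_G hq1 hqz1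
  have hs2 := summable_G (z := y⁻¹) hq1 hqz2
  refine ⟨(∑' p, G q y p) + (∑' p, G q y⁻¹ p), ?_, ?_⟩
  · -- the ℤ-indexed series
    set f : ℤ → ℂ := fun s => q ^ s * y / (1 - q ^ s * y) ^ 2 with hf
    have h1 := hasSum_G_rows hq1 hqz1 hs1
    have h2 := hasSum_G_rows hq1 hqz2 hs2
    -- nonnegative part
    have hA : HasSum (fun n : ℕ => f n) ((∑' p, G q y p) + f 0) := by
      have hzero : HasSum (fun i : ℕ => if i = 0 then f 0 else 0) (f 0) :=
        hasSum_ite_eq 0 (f 0)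
      have hadd := h1.add hzero
      have heq : (fun i : ℕ =>
          (if i = 0 then 0 else (q ^ i * y) / (1 - q ^ i * y) ^ 2)
            + (if i = 0 then f 0 else 0)) = fun i : ℕ => f (i : ℤ) := by
        funext i
        rcases eq_or_ne i 0 with rfl | hi
        · simp [hf]
        · simp [hf, hi, zpow_natCast]
      rwa [heq] at hadd
    -- negative part
    have key : ∀ i : ℕ, i ≠ 0 →
        (q ^ i * y⁻¹) / (1 - q ^ i * y⁻¹) ^ 2 = f (-(i : ℤ)) := by
      intro i hi
      have ha : q ^ (i : ℕ) ≠ 0 := pow_ne_zero _ hq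
      have hne : y ≠ q ^ (i : ℕ) := by
        have := hys (i : ℤ); rwa [zpow_natCast] at this
      have := aux_inv (q ^ i) y ha hy0 hne
      rw [hf]
      simp only [zpow_neg, zpow_natCast]
      exact this
    have hB : HasSum (fun n : ℕ => f (-((n : ℤ) + 1))) (∑' p, G q y⁻¹ p) := by
      have h2' : HasSum
          (fun i : ℕ => if i = 0 then 0 else (q ^ i * y⁻¹) / (1 - q ^ i * y⁻¹) ^ 2)
          ((∑' p, G q y⁻¹ p) + ∑ i ∈ Finset.range 1,
            (if i = 0 then 0 else (q ^ i * y⁻¹) / (1 - q ^ i * y⁻¹) ^ 2)) := by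
        simpa using h2
      have hshift := (hasSum_nat_add_iff 1).mpr h2'
      have heq : (fun n : ℕ =>
          if n + 1 = 0 then (0:ℂ)
          else (q ^ (n+1) * y⁻¹) / (1 - q ^ (n+1) * y⁻¹) ^ 2)
          = fun n : ℕ => f (-((n:ℤ) + 1)) := by
        funext n
        rw [if_neg n.succ_ne_zero, key (n+1) n.succ_ne_zero]
        norm_num
      rwa [heq] at hshift
    have hAB := hA.of_nat_of_neg_add_one hB
    have hf0 : f 0 = y / (1 - y) ^ 2 := by simp [hf]
    have harr : (∑' p, G q y p) + f 0 + (∑' p, G q y⁻¹ p)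
        = y / (1 - y) ^ 2 + ((∑' p, G q y p) + (∑' p, G q y⁻¹ p)) := by
      rw [hf0]; ring
    rwa [harr] at hAB
  · -- the divisor series
    have h1 := hasSum_G_divisors hs1
    have h2 := hasSum_G_divisors hs2
    have hadd := h1.add h2
    have heq : (fun d : ℕ =>
        (∑ k ∈ Nat.divisors d, (k : ℂ) * y ^ k) * q ^ d
          + (∑ k ∈ Nat.divisors d, (k : ℂ) * (y⁻¹) ^ k) * q ^ d)
        = fun d : ℕ =>
        (∑ k ∈ Nat.divisors d, (k : ℂ) * (y ^ (k : ℤ) + y ^ (-(k : ℤ)))) * q ^ d := by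
      funext d
      rw [← add_mul, ← Finset.sum_add_distrib]
      congr 1
      refine Finset.sum_congr rfl fun k _ => ?_
      simp only [zpow_natCast, zpow_neg, inv_pow]
      ring
    rwa [heq] at hadd
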